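/- Let f : ℝ → ℝ be a function with f(0) = 1, and suppose there exist δ > 1 and q < 0 with lim_{x→0} (f(x)-1)/|x|^δ = q. Let (nₖ) be a sequence of positive integers tending to infinity, (εₖ) a sequence in {±1}, T, c > 0, and (Λₖ) a sequence with 0 < Λₖ < T/(nₖ^{1/δ} log nₖ), such that f(nₖ) = f(εₖ(Tc/nₖ^{1/δ} + Λₖ)) for all k. Then lim_{k→∞} f(nₖ)^{nₖ} = e^{q(Tc)^δ}. -/

import Mathlib

theorem stmt_16 (f : ℝ → ℝ) (h0 : f 0 = 1) (δ q : ℝ) (hδ : 1 < δ) (hq : q < 0)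
    (hlim : Filter.Tendsto (fun x : ℝ => (f x - 1) / |x| ^ δ)
      (nhdsWithin 0 {0}ᶜ) (nhds q))
    (n : ℕ → ℕ) (hn : ∀ k, 0 < n k)
    (hn' : Filter.Tendsto n Filter.atTop Filter.atTop)
    (ε : ℕ → ℝ) (hε : ∀ k, ε k = 1 ∨ ε k = -1)
    (T c : ℝ) (hT : 0 < T) (hc : 0 < c) (Λ : ℕ → ℝ)
    (hΛ : ∀ k, 0 < Λ k ∧ Λ k < T / ((n k : ℝ) ^ ((1:ℝ)/δ) * Real.log (n k)))
    (hf : ∀ k, f (n k) = f (ε k * (T * c / (n k : ℝ) ^ ((1:ℝ)/δ) + Λ k))) :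
    Filter.Tendsto (fun k => f (n k) ^ n k) Filter.atTop
      (nhds (Real.exp (q * (T * c) ^ δ))) := by
  have hδ0 : (0:ℝ) < δ := by linarith
  set x : ℕ → ℝ := fun k => ε k * (T * c / (n k : ℝ) ^ ((1:ℝ)/δ) + Λ k) with hxdef
  set p : ℕ → ℝ := fun k => (n k : ℝ) ^ ((1:ℝ)/δ) with hpdef
  have hp_pos : ∀ k, 0 < p k := fun k =>
    Real.rpow_pos_of_pos (by exact_mod_cast hn k) _
  have hp_ge1 : ∀ k, 1 ≤ p k := fun k =>
    Real.one_le_rpow (by exact_mod_cast hn k) (by positivity)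
  have hinner_pos : ∀ k, 0 < T * c / p k + Λ k := fun k =>
    add_pos (div_pos (mul_pos hT hc) (hp_pos k)) (hΛ k).1
  have habs : ∀ k, |x k| = T * c / p k + Λ k := by
    intro k
    have : x k = ε k * (T * c / p k + Λ k) := rfl
    rw [this, abs_mul]
    rcases hε k with h | h <;>
      rw [h] <;> simp [abs_of_pos (hinner_pos k)]
  have hcast : Filter.Tendsto (fun k => (n k : ℝ)) Filter.atTop Filter.atTop :=
    tendsto_natCast_atTop_atTop.comp hn'
  have hptop : Filter.Tendsto p Filter.atTop Filter.atTop :=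
    (tendsto_rpow_atTop (by positivity)).comp hcast
  have hlogtop : Filter.Tendsto (fun k => Real.log (n k)) Filter.atTop Filter.atTop :=
    Real.tendsto_log_atTop.comp hcast
  have hTlog : Filter.Tendsto (fun k => T / Real.log (n k)) Filter.atTop (nhds 0) :=
    Filter.Tendsto.div_atTop tendsto_const_nhds hlogtop
  have hΛp_le : ∀ k, Λ k * p k ≤ T / Real.log (n k) := by
    intro k
    have h := (hΛ k).2
    have hub : T / (p k * Real.log (n k)) * p k = T / Real.log (n k) := by
      rcases eq_or_ne (Real.log (n k)) 0 with hL | hL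
      · simp [hL]
      · field_simp [hL, (hp_pos k).ne']
    calc Λ k * p k ≤ T / (p k * Real.log (n k)) * p k :=
          mul_le_mul_of_nonneg_right h.le (hp_pos k).le
      _ = T / Real.log (n k) := hub
  have hΛp : Filter.Tendsto (fun k => Λ k * p k) Filter.atTop (nhds 0) :=
    tendsto_of_tendsto_of_tendsto_of_le_of_le tendsto_const_nhds hTlog
      (fun k => mul_nonneg (hΛ k).1.le (hp_pos k).le) hΛp_le
  have hΛ0 : Filter.Tendsto Λ Filter.atTop (nhds 0) := by
    refine tendsto_of_tendsto_of_tendsto_of_le_of_le tendsto_const_nhds hΛp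
      (fun k => (hΛ k).1.le) (fun k => ?_)
    calc Λ k = Λ k * 1 := (mul_one _).symm
      _ ≤ Λ k * p k := mul_le_mul_of_nonneg_left (hp_ge1 k) (hΛ k).1.le
  have hdiv0 : Filter.Tendsto (fun k => T * c / p k) Filter.atTop (nhds 0) :=
    Filter.Tendsto.div_atTop tendsto_const_nhds hptop
  have habs0 : Filter.Tendsto (fun k => |x k|) Filter.atTop (nhds 0) := by
    have h := hdiv0.add hΛ0
    rw [add_zero] at h
    exact h.congr (fun k => (habs k).symm)
  have hx0 : Filter.Tendsto x Filter.atTop (nhdsWithin 0 {0}ᶜ) := by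
    rw [tendsto_nhdsWithin_iff]
    refine ⟨(tendsto_zero_iff_abs_tendsto_zero x).mpr habs0, ?_⟩
    filter_upwards with k
    simp only [Set.mem_compl_iff, Set.mem_singleton_iff]
    intro hzero
    have h1 : |x k| = 0 := by rw [hzero]; simp
    rw [habs k] at h1
    exact absurd h1 (ne_of_gt (hinner_pos k))
  -- key identity
  have hkey : ∀ k, (n k : ℝ) * |x k| ^ δ = (T * c + Λ k * p k) ^ δ := by
    intro k
    have hnk : (0:ℝ) < (n k : ℝ) := by exact_mod_cast hn k
    have hxk : |x k| = (T * c + Λ k * p k) / p k := by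
      rw [habs k, add_div, mul_div_cancel_right₀ _ (hp_pos k).ne']
    have hpδ : p k ^ δ = (n k : ℝ) := by
      show ((n k : ℝ) ^ ((1:ℝ)/δ)) ^ δ = (n k : ℝ)
      rw [← Real.rpow_mul (Nat.cast_nonneg _), one_div,
        inv_mul_cancel₀ (ne_of_gt hδ0), Real.rpow_one]
    have hnum : (0:ℝ) ≤ T * c + Λ k * p k :=
      add_nonneg (mul_pos hT hc).le (mul_nonneg (hΛ k).1.le (hp_pos k).le)
    rw [hxk, Real.div_rpow hnum (hp_pos k).le, hpδ, mul_div_cancel₀]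
    exact ne_of_gt hnk
  have hprod : Filter.Tendsto (fun k => T * c + Λ k * p k) Filter.atTop
      (nhds (T * c)) := by
    have h := (tendsto_const_nhds (x := T * c) (f := Filter.atTop (α := ℕ))).add hΛp
    rwa [add_zero] at h
  have hnx : Filter.Tendsto (fun k => (n k : ℝ) * |x k| ^ δ) Filter.atTop
      (nhds ((T * c) ^ δ)) := by
    have h := hprod.rpow_const (Or.inr hδ0.le)
    exact h.congr (fun k => (hkey k).symm)
  -- a_k = n_k (f(n_k) - 1) → q (Tc)^δ
  have ha : Filter.Tendsto (fun k => (n k : ℝ) * (f (n k) - 1)) Filter.atTop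
      (nhds (q * (T * c) ^ δ)) := by
    have h := (hlim.comp hx0).mul hnx
    refine h.congr (fun k => ?_)
    have hxne : |x k| ^ δ ≠ 0 := by
      have : 0 < |x k| := by rw [habs k]; exact hinner_pos k
      positivity
    simp only [Function.comp]
    rw [hf k]
    field_simp
    ring
  -- f(n_k) - 1 → 0
  have hy : Filter.Tendsto (fun k => f (n k) - 1) Filter.atTop (nhds 0) := by
    have hinv : Filter.Tendsto (fun k => ((n k : ℝ))⁻¹) Filter.atTop (nhds 0) :=
      hcast.inv_tendsto_atTop
    have h := ha.mul hinv
    rw [mul_zero] at h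
    refine h.congr (fun k => ?_)
    have hnk : (n k : ℝ) ≠ 0 := Nat.cast_ne_zero.mpr (hn k).ne'
    field_simp
  -- eventually f(n_k) - 1 ≠ 0 and f(n_k) > 0
  have hneg : ∀ᶠ k in Filter.atTop, (n k : ℝ) * (f (n k) - 1) < 0 := by
    have hlt : q * (T * c) ^ δ < 0 :=
      mul_neg_of_neg_of_pos hq (Real.rpow_pos_of_pos (mul_pos hT hc) δ)
    exact ha.eventually (gt_mem_nhds hlt)
  have hyne : ∀ᶠ k in Filter.atTop, f (n k) - 1 ≠ 0 := by
    filter_upwards [hneg] with k hk hzero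
    rw [hzero, mul_zero] at hk; exact lt_irrefl 0 hk
  have hfpos : ∀ᶠ k in Filter.atTop, 0 < f (n k) := by
    have h := hy.eventually (eventually_gt_nhds (show (-1:ℝ) < 0 by norm_num))
    filter_upwards [h] with k hk; linarith
  -- slope lemma: log(1+y)/y → 1
  have hslope : Filter.Tendsto (fun y : ℝ => Real.log (1 + y) / y)
      (nhdsWithin 0 {0}ᶜ) (nhds 1) := by
    have hd : HasDerivAt (fun y : ℝ => Real.log (1 + y)) 1 0 := by
      have h1 : HasDerivAt (fun y : ℝ => 1 + y) 1 0 := by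
        simpa using (hasDerivAt_id (0:ℝ)).const_add 1
      have h2 : HasDerivAt Real.log 1 ((fun y : ℝ => 1 + y) 0) := by
        simpa using Real.hasDerivAt_log one_ne_zero
      simpa [Function.comp_def] using h2.comp 0 h1
    have h2 := hasDerivAt_iff_tendsto_slope.mp hd
    refine h2.congr (fun y => ?_)
    simp [slope_def_field, Real.log_one]
  have hy' : Filter.Tendsto (fun k => f (n k) - 1) Filter.atTop
      (nhdsWithin 0 {0}ᶜ) := by
    rw [tendsto_nhdsWithin_iff]
    exact ⟨hy, hyne.mono (fun k hk => by simpa using hk)⟩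
  have hratio : Filter.Tendsto
      (fun k => Real.log (1 + (f (n k) - 1)) / (f (n k) - 1)) Filter.atTop
      (nhds 1) := hslope.comp hy'
  -- n_k log f(n_k) → q (Tc)^δ
  have hnl : Filter.Tendsto (fun k => (n k : ℝ) * Real.log (f (n k)))
      Filter.atTop (nhds (q * (T * c) ^ δ)) := by
    have h := ha.mul hratio
    rw [mul_one] at h
    refine h.congr' ?_
    filter_upwards [hyne] with k hk
    rw [show (1:ℝ) + (f (n k) - 1) = f (n k) by ring]
    field_simp
  -- conclude
  have hexp := (Real.continuous_exp.tendsto _).comp hnl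
  refine hexp.congr' ?_
  filter_upwards [hfpos] with k hk
  simp only [Function.comp]
  rw [Real.exp_nat_mul, Real.exp_log hk]
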